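/- Let t_p(x) = (1-x^2)/(1-x^p) for x ∈ [0,1). For each p ∈ (0,2), the function t_p is strictly increasing on [0,1) and takes values in [1, 2/p); for each p > 2, the function t_p is strictly decreasing on [0,1) and takes values in (2/p, 1]. -/

import Mathlib

section aux

private lemma keyPos' (a b : ℝ) (ha : 0 < a) (hab : a < b) :
    b * (Real.exp a - 1) < a * (Real.exp b - 1) := by
  have hb : 0 < b := ha.trans hab
  have h := strictConvexOn_exp.2 (Set.mem_univ (0:ℝ)) (Set.mem_univ b) hb.ne
    (show (0:ℝ) < 1 - a/b by rw [sub_pos]; exact (div_lt_one hb).2 hab)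
    (show (0:ℝ) < a/b by positivity) (by ring)
  simp only [smul_eq_mul, mul_zero, zero_add, Real.exp_zero, mul_one] at h
  rw [div_mul_cancel₀ _ hb.ne'] at h
  have h2 := mul_lt_mul_of_pos_left h hb
  have h3 : b * (1 - a / b + a / b * Real.exp b) = b - a + a * Real.exp b := by
    field_simp
  rw [h3] at h2
  linarith

private lemma keyNeg' (a b : ℝ) (hab : a < b) (hb : b < 0) :
    b * (Real.exp a - 1) < a * (Real.exp b - 1) := by
  have ha : a < 0 := hab.trans hb
  have hba1 : b / a < 1 := by rw [div_lt_one_of_neg ha]; exact hab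
  have h := strictConvexOn_exp.2 (Set.mem_univ (0:ℝ)) (Set.mem_univ a) ha.ne'
    (show (0:ℝ) < 1 - b/a by linarith)
    (div_pos_of_neg_of_neg hb ha) (by ring)
  simp only [smul_eq_mul, mul_zero, zero_add, Real.exp_zero, mul_one] at h
  rw [div_mul_cancel₀ _ ha.ne] at h
  have h2 := mul_lt_mul_of_neg_left h ha
  have h3 : a * (1 - b / a + b / a * Real.exp a) = a - b + b * Real.exp a := by
    field_simp [ha.ne]
  rw [h3] at h2
  linarith

private lemma G1' (q r x : ℝ) (hq : 0 < q) (hqr : q < r) (hx0 : 0 < x) (hx1 : x < 1) :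
    q * (1 - x ^ r) < r * (1 - x ^ q) := by
  set l := Real.log x with hldef
  have hl : l < 0 := Real.log_neg hx0 hx1
  have h := keyNeg' (r*l) (q*l) (by nlinarith) (by nlinarith)
  rw [Real.rpow_def_of_pos hx0, Real.rpow_def_of_pos hx0]
  have h' : (-l) * (q * (1 - Real.exp (l*r))) < (-l) * (r * (1 - Real.exp (l*q))) := by
    rw [show l*r = r*l by ring, show l*q = q*l by ring]
    linear_combination h
  exact lt_of_mul_lt_mul_left h' (by linarith)

private lemma G2' (q r x : ℝ) (hq : 0 < q) (hqr : q < r) (hx0 : 0 < x) (hx1 : x < 1) :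
    r * x ^ r * (1 - x ^ q) < q * x ^ q * (1 - x ^ r) := by
  set l := Real.log x with hldef
  have hl : l < 0 := Real.log_neg hx0 hx1
  have hX : 0 < x ^ q := Real.rpow_pos_of_pos hx0 q
  have hY : 0 < x ^ r := Real.rpow_pos_of_pos hx0 r
  have h := keyPos' (-(q*l)) (-(r*l)) (by nlinarith) (by nlinarith)
  have eX : Real.exp (-(q*l)) = (x ^ q)⁻¹ := by
    rw [Real.rpow_def_of_pos hx0, ← Real.exp_neg]; ring_nf; rfl
  have eY : Real.exp (-(r*l)) = (x ^ r)⁻¹ := by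
    rw [Real.rpow_def_of_pos hx0, ← Real.exp_neg]; ring_nf; rfl
  rw [eX, eY] at h
  have h2 := mul_lt_mul_of_pos_left h (mul_pos hX hY)
  have e1 : (x^q * x^r) * (-(r*l) * ((x^q)⁻¹ - 1)) = (-l) * (r * x^r * (1 - x^q)) := by
    field_simp
  have e2 : (x^q * x^r) * (-(q*l) * ((x^r)⁻¹ - 1)) = (-l) * (q * x^q * (1 - x^r)) := by
    field_simp
  rw [e1, e2] at h2
  exact lt_of_mul_lt_mul_left h2 (by linarith)

private lemma rpow_two' (x : ℝ) : x ^ (2:ℝ) = x ^ (2:ℕ) := by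
  rw [show (2:ℝ) = ((2:ℕ):ℝ) by norm_num, Real.rpow_natCast]

private lemma denom_pos' (p x : ℝ) (hp : 0 < p) (hx0 : 0 ≤ x) (hx1 : x < 1) :
    0 < 1 - x ^ p := by
  rcases eq_or_lt_of_le hx0 with h | h
  · simp [← h, Real.zero_rpow hp.ne']
  · have := Real.rpow_lt_one hx0 hx1 hp
    linarith

private lemma cont' (p : ℝ) (hp : 0 < p) :
    ContinuousOn (fun x : ℝ => (1 - x ^ 2) / (1 - x ^ p)) (Set.Ico (0:ℝ) 1) := by
  apply ContinuousOn.div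
  · exact (continuous_const.sub (continuous_pow 2)).continuousOn
  · exact continuousOn_const.sub fun x _ =>
      (Real.continuousAt_rpow_const x p (Or.inr hp.le)).continuousWithinAt
  · intro x hx
    exact (denom_pos' p x hp hx.1 hx.2).ne'

private lemma hasDeriv' (p x : ℝ) (hp : 0 < p) (hx0 : 0 < x) (hx1 : x < 1) :
    HasDerivAt (fun x : ℝ => (1 - x ^ 2) / (1 - x ^ p))
      ((-(2*x) * (1 - x ^ p) - (1 - x ^ 2) * -(p * x ^ (p-1))) / (1 - x ^ p) ^ 2) x := by
  have hd1 : HasDerivAt (fun y : ℝ => 1 - y ^ 2) (-(2*x)) x := by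
    have h := (hasDerivAt_pow 2 x).const_sub 1
    norm_num at h
    exact h
  have hd2 : HasDerivAt (fun y : ℝ => 1 - y ^ p) (-(p * x ^ (p-1))) x :=
    (Real.hasDerivAt_rpow_const (Or.inl hx0.ne')).const_sub 1
  exact hd1.div hd2 (denom_pos' p x hp hx0.le hx1).ne'

end aux


/-- For `p ∈ (0,2)`, the function `t_p(x) = (1-x^2)/(1-x^p)` is strictly increasing on
`[0,1)` with values in `[1, 2/p)`; for `p > 2` it is strictly decreasing on `[0,1)` with
values in `(2/p, 1]`. -/
theorem statement1 (p : ℝ) (hp : 0 < p) :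
    (p < 2 →
      StrictMonoOn (fun x : ℝ => (1 - x ^ 2) / (1 - x ^ p)) (Set.Ico (0 : ℝ) 1) ∧
      ∀ x ∈ Set.Ico (0 : ℝ) 1, (1 - x ^ 2) / (1 - x ^ p) ∈ Set.Ico (1 : ℝ) (2 / p)) ∧
    (2 < p →
      StrictAntiOn (fun x : ℝ => (1 - x ^ 2) / (1 - x ^ p)) (Set.Ico (0 : ℝ) 1) ∧
      ∀ x ∈ Set.Ico (0 : ℝ) 1, (1 - x ^ 2) / (1 - x ^ p) ∈ Set.Ioc (2 / p) (1 : ℝ)) := by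
  constructor
  · intro hp2
    constructor
    · apply strictMonoOn_of_deriv_pos (convex_Ico 0 1) (cont' p hp)
      intro x hx
      rw [interior_Ico] at hx
      obtain ⟨hx0, hx1⟩ := hx
      rw [(hasDeriv' p x hp hx0 hx1).deriv]
      have hden := denom_pos' p x hp hx0.le hx1
      apply div_pos _ (pow_pos hden 2)
      have hkey := G2' p 2 x hp hp2 hx0 hx1
      rw [rpow_two'] at hkey
      have hxp : x ^ p = x ^ (p-1) * x := by
        rw [← Real.rpow_add_one hx0.ne' (p-1)]; ring_nf
      rw [hxp] at hkey ⊢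
      nlinarith [hkey, hx0, Real.rpow_pos_of_pos hx0 (p-1)]
    · intro x hx
      obtain ⟨hx0, hx1⟩ := hx
      have hden := denom_pos' p x hp hx0 hx1
      constructor
      · rw [le_div_iff₀ hden, one_mul]
        rcases eq_or_lt_of_le hx0 with h | h
        · simp [← h, Real.zero_rpow hp.ne']
        · have := Real.rpow_le_rpow_of_exponent_ge h hx1.le hp2.le
          rw [rpow_two'] at this
          linarith
      · rw [div_lt_div_iff₀ hden hp]
        rcases eq_or_lt_of_le hx0 with h | h
        · simp [← h, Real.zero_rpow hp.ne']
          linarith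
        · have := G1' p 2 x hp hp2 h hx1
          rw [rpow_two'] at this
          linarith
  · intro hp2
    have h2 : (0:ℝ) < 2 := by norm_num
    constructor
    · apply strictAntiOn_of_deriv_neg (convex_Ico 0 1) (cont' p hp)
      intro x hx
      rw [interior_Ico] at hx
      obtain ⟨hx0, hx1⟩ := hx
      rw [(hasDeriv' p x hp hx0 hx1).deriv]
      have hden := denom_pos' p x hp hx0.le hx1
      apply div_neg_of_neg_of_pos _ (pow_pos hden 2)
      have hkey := G2' 2 p x h2 hp2 hx0 hx1
      rw [rpow_two'] at hkey
      have hxp : x ^ p = x ^ (p-1) * x := by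
        rw [← Real.rpow_add_one hx0.ne' (p-1)]; ring_nf
      rw [hxp] at hkey ⊢
      nlinarith [hkey, hx0, Real.rpow_pos_of_pos hx0 (p-1)]
    · intro x hx
      obtain ⟨hx0, hx1⟩ := hx
      have hden := denom_pos' p x hp hx0 hx1
      constructor
      · rw [div_lt_div_iff₀ hp hden]
        rcases eq_or_lt_of_le hx0 with h | h
        · simp [← h, Real.zero_rpow hp.ne']
          linarith
        · have := G1' 2 p x h2 hp2 h hx1
          rw [rpow_two'] at this
          linarith
      · rw [div_le_one hden]
        rcases eq_or_lt_of_le hx0 with h | h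
        · simp [← h, Real.zero_rpow hp.ne']
        · have := Real.rpow_le_rpow_of_exponent_ge h hx1.le hp2.le
          rw [rpow_two'] at this
          linarith
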